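/- arXiv:1501.04214 — 2 statements merged into one kernel-verified Lean document; each statement's English description precedes it below -/
import Mathlib

section
/- Let W be a Weyl group, I a subset of simple roots, W_P the corresponding parabolic subgroup. If y = σ_1⋯σ_l is a reduced expression of a minimal-length coset representative y of yW_P, then for i < j the cosets (σ_1⋯σ̂_i⋯σ_l)W_P and (σ_1⋯σ̂_j⋯σ_l)W_P are distinct (where σ̂_k denotes omission of the k-th factor). -/
open List CoxeterSystem

/-- if `y = σ₁⋯σ_l` is a reduced word for the minimal-length
representative of the coset `yW_P`, then deleting two different letters gives
distinct cosets of `W_P`. -/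
theorem stable_basis.distinct_cosets_of_deleted_letters
    {B W : Type} [Group W] {M : CoxeterMatrix B}
    (cs : CoxeterSystem M W)
    (I : Set B) (WP : Subgroup W) (hWP : WP = Subgroup.closure (cs.simple '' I))
    (ω : List B) (hred : cs.IsReduced ω)
    (y : W) (hy : y = cs.wordProd ω)
    (hmin : ∀ v : W, y⁻¹ * v ∈ WP → cs.length y ≤ cs.length v)
    (i j : Fin ω.length) (hij : i < j) :
    (cs.wordProd (ω.eraseIdx i.1))⁻¹ * cs.wordProd (ω.eraseIdx j.1) ∉ WP := by
  intro h
  have j_lt_j' : i.1 < j.1 := hij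
  have j'_lt_length : j.1 < ω.length := j.isLt
  set t := (cs.rightInvSeq ω).getD i.1 1 with h₁
  set t' := (cs.rightInvSeq (ω.eraseIdx i.1)).getD (j.1 - 1) 1 with h₂
  have h₃ : t' = (cs.rightInvSeq ω).getD j.1 1 := by
    rw [h₂, cs.getD_rightInvSeq, cs.getD_rightInvSeq,
      (Nat.sub_add_cancel (by omega) : j.1 - 1 + 1 = j.1), eraseIdx_eq_take_drop_succ,
      drop_append, drop_of_length_le (by simp [j_lt_j'.le]), length_take,
      drop_drop, nil_append, min_eq_left_of_lt (j_lt_j'.trans j'_lt_length), Nat.add_comm,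
      ← add_assoc, Nat.sub_add_cancel (by omega), mul_left_inj, mul_right_inj]
    congr 2
    show (take i.1 ω ++ drop (i.1 + 1) ω)[j.1 - 1]? = ω[j.1]?
    rw [getElem?_append_right (by simp [Nat.le_sub_one_of_lt j_lt_j']), getElem?_drop]
    congr
    show i.1 + 1 + (j.1 - 1 - List.length (take i.1 ω)) = j.1
    rw [length_take]
    omega
  have ht : cs.IsReflection t := by
    apply cs.isReflection_of_mem_rightInvSeq ω
    rw [h₁, List.getD_eq_getElem _ 1 (by rw [cs.length_rightInvSeq]; omega)]
    exact List.getElem_mem _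
  have hkey : (cs.wordProd (ω.eraseIdx i.1))⁻¹ * cs.wordProd (ω.eraseIdx j.1) = t * t' := by
    rw [← cs.wordProd_mul_getD_rightInvSeq ω i.1, ← cs.wordProd_mul_getD_rightInvSeq ω j.1,
      ← h₁, ← h₃, mul_inv_rev, mul_assoc, inv_mul_cancel_left, ht.inv]
  have h₅ : y * (t * t') = cs.wordProd ((ω.eraseIdx i.1).eraseIdx (j.1 - 1)) := by
    rw [hy, ← mul_assoc, h₁, cs.wordProd_mul_getD_rightInvSeq ω i.1, h₂,
      cs.wordProd_mul_getD_rightInvSeq]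
  have hlen : cs.length (y * (t * t')) ≤ ((ω.eraseIdx i.1).eraseIdx (j.1 - 1)).length := by
    rw [h₅]; exact cs.length_wordProd_le _
  have hly : cs.length y = ω.length := by rw [hy]; exact hred
  have hmem : y⁻¹ * (y * (t * t')) ∈ WP := by
    rwa [inv_mul_cancel_left, ← hkey]
  have h₆ := hmin _ hmem
  have h₈ : j.1 - 1 < List.length (ω.eraseIdx i.1) := by
    rw [List.length_eraseIdx_of_lt (by omega)]; omega
  have e1 := List.length_eraseIdx_add_one h₈
  have e2 := List.length_eraseIdx_add_one (show i.1 < ω.length by omega)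
  omega
end

section
/- With ξ as above, for a simple root α with l(yσ_α) = l(y)+1 and a reduced word y = σ_1⋯σ_l: ξ_{α_1,…,α_l,α}(w) = (ℏ/(wα)) ξ_{α_1,…,α_l}(w) + ((wα−ℏ)/(wα)) ξ_{α_1,…,α_l}(wσ_α) for all w ∈ W. -/
open scoped Classical
noncomputable section

namespace StableBasis14

variable {B W Q : Type} [Group W] [Field Q] {M : CoxeterMatrix B}

/-- The ordered product of the letters of `ω` at the positions in `s`. -/
def subwordProd (cs : CoxeterSystem M W) (ω : List B)
    (s : Finset (Fin ω.length)) : W :=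
  cs.wordProd ((s.sort (· ≤ ·)).map fun k => ω.get k)

/-- For `k ∈ s`, `σ_{i_1}⋯σ_{i_j} α_{i_j}` where `i_j = k`: apply the product of
the selected letters in positions `≤ k` to the simple root at position `k`. -/
def gam (cs : CoxeterSystem M W) (act : W →* Q ≃+* Q) (sroot : B → Q)
    (ω : List B) (s : Finset (Fin ω.length)) (k : Fin ω.length) : Q :=
  act (subwordProd cs ω (s.filter (· ≤ k))) (sroot (ω.get k))

/-- For `r ∉ s` (a "gap" position), `σ_{i_1}⋯σ_{i_j} α_r` where `i_j < r < i_{j+1}`: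
apply the product of the selected letters in positions `< r` to the simple root
at position `r`. -/
def gap (cs : CoxeterSystem M W) (act : W →* Q ≃+* Q) (sroot : B → Q)
    (ω : List B) (s : Finset (Fin ω.length)) (r : Fin ω.length) : Q :=
  act (subwordProd cs ω (s.filter (· < r))) (sroot (ω.get r))

/-- The function `ξ_{α_1,…,α_l}(w)`. -/
def xi (cs : CoxeterSystem M W) (act : W →* Q ≃+* Q) (sroot : B → Q) (hbar : Q)
    (ω : List B) (w : W) : Q :=
  ∑ s ∈ Finset.univ.filter
      (fun s : Finset (Fin ω.length) => subwordProd cs ω s = w),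
    (∏ k ∈ s, (gam cs act sroot ω s k - hbar) / gam cs act sroot ω s k)
      * (hbar ^ (ω.length - s.card) / ∏ r ∈ sᶜ, gap cs act sroot ω s r)

section Aux

variable (ω : List B) (i : B)

lemma len_append : (ω ++ [i]).length = ω.length + 1 := by simp

def emb : Fin ω.length ↪ Fin (ω ++ [i]).length :=
  Fin.castLEEmb (by simp)

def lastIdx : Fin (ω ++ [i]).length := ⟨ω.length, by simp⟩

lemma emb_val (k : Fin ω.length) : ((emb ω i k : Fin (ω ++ [i]).length) : ℕ) = (k : ℕ) := rfl

lemma emb_ne_last (k : Fin ω.length) : emb ω i k ≠ lastIdx ω i := by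
  simp only [Fin.ne_iff_vne, emb_val, lastIdx]
  exact k.isLt.ne

lemma le_last (j : Fin (ω ++ [i]).length) : j ≤ lastIdx ω i := by
  have h : (j : ℕ) < ω.length + 1 := by simpa using j.isLt
  simp only [Fin.le_def, lastIdx]
  omega

lemma emb_le_emb {a b : Fin ω.length} : emb ω i a ≤ emb ω i b ↔ a ≤ b := by
  rw [Fin.le_def, Fin.le_def, emb_val, emb_val]

lemma emb_lt_emb {a b : Fin ω.length} : emb ω i a < emb ω i b ↔ a < b := by
  rw [Fin.lt_def, Fin.lt_def, emb_val, emb_val]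

lemma emb_lt_last (k : Fin ω.length) : emb ω i k < lastIdx ω i := by
  simp only [Fin.lt_def, emb_val, lastIdx]
  exact k.isLt

lemma get_emb (k : Fin ω.length) : (ω ++ [i]).get (emb ω i k) = ω.get k := by
  simp [List.get_eq_getElem, emb_val, List.getElem_append_left k.isLt]

lemma get_last : (ω ++ [i]).get (lastIdx ω i) = i := by
  simp only [List.get_eq_getElem, lastIdx]
  exact List.getElem_concat_length rfl _

lemma sort_map (t : Finset (Fin ω.length)) :
    (t.map (emb ω i)).sort (· ≤ ·) = (t.sort (· ≤ ·)).map (emb ω i) := by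
  refine (fun hp hs₂ => List.Perm.eq_of_pairwise' (Finset.pairwise_sort _ _) hs₂ hp) ?_ ?_
  · rw [← Multiset.coe_eq_coe]
    simp only [Finset.sort_eq, Finset.map_val, ← Multiset.map_coe]
  · exact List.Pairwise.map _ (fun a b h => (emb_le_emb ω i).mpr h) (Finset.pairwise_sort t _)

lemma not_mem_map_last (t : Finset (Fin ω.length)) : lastIdx ω i ∉ t.map (emb ω i) := by
  intro h
  rcases Finset.mem_map.mp h with ⟨k, _, hk⟩
  exact emb_ne_last ω i k hk

lemma sort_insert_last (t : Finset (Fin ω.length)) :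
    (insert (lastIdx ω i) (t.map (emb ω i))).sort (· ≤ ·)
      = (t.map (emb ω i)).sort (· ≤ ·) ++ [lastIdx ω i] := by
  refine (fun hp hs₂ => List.Perm.eq_of_pairwise' (Finset.pairwise_sort _ _) hs₂ hp) ?_ ?_
  · have h := not_mem_map_last ω i t
    have p1 : ((insert (lastIdx ω i) (t.map (emb ω i))).sort (· ≤ ·)).Perm
        (lastIdx ω i :: (t.map (emb ω i)).sort (· ≤ ·)) := by
      rw [← Multiset.coe_eq_coe]
      simp only [← Multiset.cons_coe, Finset.sort_eq, Finset.insert_val_of_notMem h,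
        Finset.map_val]
    exact p1.trans (List.perm_append_singleton _ _).symm
  · refine List.pairwise_append.mpr ⟨Finset.pairwise_sort _ _, by simp, ?_⟩
    intro a _ b hb
    simp only [List.mem_singleton] at hb
    subst hb
    exact le_last ω i a

lemma exists_emb (j : Fin (ω ++ [i]).length) (hj : j ≠ lastIdx ω i) :
    ∃ k, emb ω i k = j := by
  have h1 : (j : ℕ) < ω.length + 1 := by simpa using j.isLt
  have h2 : (j : ℕ) ≠ ω.length := fun hh => hj (Fin.ext hh)
  exact ⟨⟨j, by omega⟩, Fin.ext rfl⟩

lemma subwordProd_map (cs : CoxeterSystem M W) (t : Finset (Fin ω.length)) :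
    subwordProd cs (ω ++ [i]) (t.map (emb ω i)) = subwordProd cs ω t := by
  unfold subwordProd
  rw [sort_map, List.map_map]
  congr 1
  apply List.map_congr_left
  intro k _
  exact get_emb ω i k

lemma subwordProd_insert (cs : CoxeterSystem M W) (t : Finset (Fin ω.length)) :
    subwordProd cs (ω ++ [i]) (insert (lastIdx ω i) (t.map (emb ω i)))
      = subwordProd cs ω t * cs.simple i := by
  unfold subwordProd
  rw [sort_insert_last, List.map_append, cs.wordProd_append]
  congr 1
  · rw [sort_map, List.map_map]
    congr 1
    apply List.map_congr_left
    intro k _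
    exact get_emb ω i k
  · simp only [List.map_cons, List.map_nil, get_last]
    exact cs.wordProd_singleton i

lemma filter_le_map (t : Finset (Fin ω.length)) (k : Fin ω.length) :
    (t.map (emb ω i)).filter (· ≤ emb ω i k) = (t.filter (· ≤ k)).map (emb ω i) := by
  rw [Finset.filter_map]
  congr 1

lemma filter_lt_map (t : Finset (Fin ω.length)) (k : Fin ω.length) :
    (t.map (emb ω i)).filter (· < emb ω i k) = (t.filter (· < k)).map (emb ω i) := by
  rw [Finset.filter_map]
  congr 1

lemma compl_map (t : Finset (Fin ω.length)) :
    (t.map (emb ω i))ᶜ = insert (lastIdx ω i) (tᶜ.map (emb ω i)) := by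
  ext j
  simp only [Finset.mem_compl, Finset.mem_insert, Finset.mem_map]
  by_cases hj : j = lastIdx ω i
  · subst hj
    constructor
    · intro _; exact Or.inl rfl
    · rintro - ⟨k, -, hk⟩; exact emb_ne_last ω i k hk
  · obtain ⟨k0, rfl⟩ := exists_emb ω i j hj
    constructor
    · intro hn
      right
      exact ⟨k0, fun hk => hn ⟨k0, hk, rfl⟩, rfl⟩
    · rintro (he | ⟨k, hk, hke⟩) ⟨k', hk', hke'⟩
      · exact emb_ne_last ω i k0 he
      · have : k = k' := (emb ω i).injective (hke.trans hke'.symm)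
        subst this
        exact hk hk'

lemma compl_insert_map (t : Finset (Fin ω.length)) :
    (insert (lastIdx ω i) (t.map (emb ω i)))ᶜ = tᶜ.map (emb ω i) := by
  rw [Finset.compl_insert, compl_map, Finset.erase_insert (not_mem_map_last ω i tᶜ)]

def pre (s : Finset (Fin (ω ++ [i]).length)) : Finset (Fin ω.length) :=
  Finset.univ.filter (fun k => emb ω i k ∈ s)

lemma eq_map_pre (s : Finset (Fin (ω ++ [i]).length)) (h : lastIdx ω i ∉ s) :
    (pre ω i s).map (emb ω i) = s := by
  ext j
  constructor
  · intro hm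
    rcases Finset.mem_map.mp hm with ⟨k, hk, rfl⟩
    exact (Finset.mem_filter.mp hk).2
  · intro hm
    obtain ⟨k, rfl⟩ := exists_emb ω i j (fun e => h (e ▸ hm))
    exact Finset.mem_map_of_mem _ (Finset.mem_filter.mpr ⟨Finset.mem_univ _, hm⟩)

lemma eq_insert_pre (s : Finset (Fin (ω ++ [i]).length)) (h : lastIdx ω i ∈ s) :
    insert (lastIdx ω i) ((pre ω i s).map (emb ω i)) = s := by
  ext j
  constructor
  · intro hm
    rcases Finset.mem_insert.mp hm with rfl | hm
    · exact h
    · rcases Finset.mem_map.mp hm with ⟨k, hk, rfl⟩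
      exact (Finset.mem_filter.mp hk).2
  · intro hm
    by_cases hj : j = lastIdx ω i
    · subst hj; exact Finset.mem_insert_self _ _
    · obtain ⟨k, rfl⟩ := exists_emb ω i j hj
      exact Finset.mem_insert_of_mem
        (Finset.mem_map_of_mem _ (Finset.mem_filter.mpr ⟨Finset.mem_univ _, hm⟩))

lemma pre_map (t : Finset (Fin ω.length)) : pre ω i (t.map (emb ω i)) = t := by
  ext k
  simp [pre, Finset.mem_map']

lemma pre_insert_map (t : Finset (Fin ω.length)) :
    pre ω i (insert (lastIdx ω i) (t.map (emb ω i))) = t := by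
  ext k
  simp [pre, Finset.mem_insert, Finset.mem_map', emb_ne_last ω i k]

lemma card_le (t : Finset (Fin ω.length)) : t.card ≤ ω.length := by
  simpa using Finset.card_le_univ t

end Aux

section Aux2

variable (cs : CoxeterSystem M W) (act : W →* Q ≃+* Q) (sroot : B → Q) (hbar : Q)
  (ω : List B) (i : B)

lemma gam_map (t : Finset (Fin ω.length)) (k : Fin ω.length) :
    gam cs act sroot (ω ++ [i]) (t.map (emb ω i)) (emb ω i k) = gam cs act sroot ω t k := by
  unfold gam
  rw [filter_le_map, subwordProd_map, get_emb]

lemma gam_insert_emb (t : Finset (Fin ω.length)) (k : Fin ω.length) :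
    gam cs act sroot (ω ++ [i]) (insert (lastIdx ω i) (t.map (emb ω i))) (emb ω i k)
      = gam cs act sroot ω t k := by
  unfold gam
  rw [Finset.filter_insert, if_neg (not_le.mpr (emb_lt_last ω i k)), filter_le_map,
    subwordProd_map, get_emb]

lemma gam_insert_last (t : Finset (Fin ω.length)) :
    gam cs act sroot (ω ++ [i]) (insert (lastIdx ω i) (t.map (emb ω i))) (lastIdx ω i)
      = act (subwordProd cs ω t * cs.simple i) (sroot i) := by
  unfold gam
  rw [Finset.filter_true_of_mem (fun x _ => le_last ω i x), subwordProd_insert, get_last]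

lemma gap_map_emb (t : Finset (Fin ω.length)) (r : Fin ω.length) :
    gap cs act sroot (ω ++ [i]) (t.map (emb ω i)) (emb ω i r) = gap cs act sroot ω t r := by
  unfold gap
  rw [filter_lt_map, subwordProd_map, get_emb]

lemma gap_map_last (t : Finset (Fin ω.length)) :
    gap cs act sroot (ω ++ [i]) (t.map (emb ω i)) (lastIdx ω i)
      = act (subwordProd cs ω t) (sroot i) := by
  unfold gap
  rw [Finset.filter_true_of_mem, subwordProd_map, get_last]
  intro x hx
  rcases Finset.mem_map.mp hx with ⟨k, _, rfl⟩
  exact emb_lt_last ω i k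

lemma gap_insert_emb (t : Finset (Fin ω.length)) (r : Fin ω.length) :
    gap cs act sroot (ω ++ [i]) (insert (lastIdx ω i) (t.map (emb ω i))) (emb ω i r)
      = gap cs act sroot ω t r := by
  unfold gap
  rw [Finset.filter_insert, if_neg (not_lt.mpr (le_last ω i _)), filter_lt_map,
    subwordProd_map, get_emb]

lemma term_notmem (w : W) (t : Finset (Fin ω.length)) (h : subwordProd cs ω t = w) :
    (∏ k ∈ t.map (emb ω i),
        (gam cs act sroot (ω ++ [i]) (t.map (emb ω i)) k - hbar)
          / gam cs act sroot (ω ++ [i]) (t.map (emb ω i)) k)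
      * (hbar ^ ((ω ++ [i]).length - (t.map (emb ω i)).card)
          / ∏ r ∈ (t.map (emb ω i))ᶜ, gap cs act sroot (ω ++ [i]) (t.map (emb ω i)) r)
    = hbar / act w (sroot i)
        * ((∏ k ∈ t, (gam cs act sroot ω t k - hbar) / gam cs act sroot ω t k)
          * (hbar ^ (ω.length - t.card) / ∏ r ∈ tᶜ, gap cs act sroot ω t r)) := by
  rw [Finset.prod_map, compl_map, Finset.prod_insert (not_mem_map_last ω i tᶜ),
    Finset.prod_map]
  simp only [gam_map, gap_map_emb, gap_map_last]
  rw [h, Finset.card_map]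
  have hc : (ω ++ [i]).length - t.card = (ω.length - t.card) + 1 := by
    rw [len_append]
    have := card_le ω t
    omega
  rw [hc, pow_succ]
  ring

lemma term_mem (w : W) (t : Finset (Fin ω.length))
    (h : subwordProd cs ω t = w * cs.simple i) :
    (∏ k ∈ insert (lastIdx ω i) (t.map (emb ω i)),
        (gam cs act sroot (ω ++ [i]) (insert (lastIdx ω i) (t.map (emb ω i))) k - hbar)
          / gam cs act sroot (ω ++ [i]) (insert (lastIdx ω i) (t.map (emb ω i))) k)
      * (hbar ^ ((ω ++ [i]).length - (insert (lastIdx ω i) (t.map (emb ω i))).card)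
          / ∏ r ∈ (insert (lastIdx ω i) (t.map (emb ω i)))ᶜ,
              gap cs act sroot (ω ++ [i]) (insert (lastIdx ω i) (t.map (emb ω i))) r)
    = (act w (sroot i) - hbar) / act w (sroot i)
        * ((∏ k ∈ t, (gam cs act sroot ω t k - hbar) / gam cs act sroot ω t k)
          * (hbar ^ (ω.length - t.card) / ∏ r ∈ tᶜ, gap cs act sroot ω t r)) := by
  rw [Finset.prod_insert (not_mem_map_last ω i t), Finset.prod_map, compl_insert_map,
    Finset.prod_map]
  simp only [gam_insert_emb, gap_insert_emb]
  rw [gam_insert_last, h]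
  have hα : act (w * cs.simple i * cs.simple i) (sroot i) = act w (sroot i) := by
    rw [mul_assoc, cs.simple_mul_simple_self, mul_one]
  rw [hα, Finset.card_insert_of_notMem (not_mem_map_last ω i t), Finset.card_map]
  have hc : (ω ++ [i]).length - (t.card + 1) = ω.length - t.card := by
    rw [len_append]
    omega
  rw [hc]
  ring

end Aux2

/-- the recursion
`ξ_{α_1,…,α_l,α}(w) = (ℏ/(wα)) ξ_{α_1,…,α_l}(w) + ((wα−ℏ)/(wα)) ξ_{α_1,…,α_l}(wσ_α)`
whenever `l(yσ_α) = l(y) + 1`. -/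
theorem xi_recursion
    (cs : CoxeterSystem M W)
    (act : W →* Q ≃+* Q) (pos : Finset Q) (sroot : B → Q) (hbar : Q)
    (hfix : ∀ w : W, act w hbar = hbar) (hbar_ne : hbar ≠ 0)
    (hpos : ∀ α ∈ pos, -α ∉ pos)
    (hperm : ∀ (w : W), ∀ α ∈ pos, act w α ∈ pos ∨ -(act w α) ∈ pos)
    (hsimple : ∀ i, sroot i ∈ pos)
    (hsimple_neg : ∀ i, act (cs.simple i) (sroot i) = -sroot i)
    (hsimple_perm : ∀ i, ∀ α ∈ pos, α ≠ sroot i → act (cs.simple i) α ∈ pos)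
    (ω : List B) (i : B)
    (hred : cs.IsReduced ω) (hred' : cs.IsReduced (ω ++ [i]))
    (w : W) (hw : act w (sroot i) ≠ 0) :
    xi cs act sroot hbar (ω ++ [i]) w
      = (hbar / act w (sroot i)) * xi cs act sroot hbar ω w
        + ((act w (sroot i) - hbar) / act w (sroot i))
          * xi cs act sroot hbar ω (w * cs.simple i) := by
  simp only [xi]
  rw [← Finset.sum_filter_add_sum_filter_not
    (Finset.univ.filter (fun s => subwordProd cs (ω ++ [i]) s = w))
    (fun s => lastIdx ω i ∈ s), add_comm]
  congr 1
  · -- last index not selected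
    rw [Finset.mul_sum]
    refine Finset.sum_nbij' (pre ω i) (fun t => t.map (emb ω i)) ?_ ?_ ?_ ?_ ?_
    · intro s hs
      obtain ⟨hs1, hs2⟩ := Finset.mem_filter.mp hs
      obtain ⟨-, hP⟩ := Finset.mem_filter.mp hs1
      refine Finset.mem_filter.mpr ⟨Finset.mem_univ _, ?_⟩
      rw [← subwordProd_map, eq_map_pre ω i s hs2]
      exact hP
    · intro t ht
      obtain ⟨-, hP⟩ := Finset.mem_filter.mp ht
      refine Finset.mem_filter.mpr ⟨Finset.mem_filter.mpr ⟨Finset.mem_univ _, ?_⟩, ?_⟩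
      · rw [subwordProd_map]; exact hP
      · exact not_mem_map_last ω i t
    · intro s hs
      exact eq_map_pre ω i s (Finset.mem_filter.mp hs).2
    · intro t ht
      exact pre_map ω i t
    · intro s hs
      obtain ⟨hs1, hs2⟩ := Finset.mem_filter.mp hs
      obtain ⟨-, hP⟩ := Finset.mem_filter.mp hs1
      have hmap : (pre ω i s).map (emb ω i) = s := eq_map_pre ω i s hs2
      have hsub : subwordProd cs ω (pre ω i s) = w := by
        rw [← subwordProd_map, hmap]; exact hP
      conv_lhs => rw [← hmap]
      exact term_notmem cs act sroot hbar ω i w (pre ω i s) hsub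
  · -- last index selected
    rw [Finset.mul_sum]
    refine Finset.sum_nbij' (pre ω i)
      (fun t => insert (lastIdx ω i) (t.map (emb ω i))) ?_ ?_ ?_ ?_ ?_
    · intro s hs
      obtain ⟨hs1, hs2⟩ := Finset.mem_filter.mp hs
      obtain ⟨-, hP⟩ := Finset.mem_filter.mp hs1
      refine Finset.mem_filter.mpr ⟨Finset.mem_univ _, ?_⟩
      have hins : insert (lastIdx ω i) ((pre ω i s).map (emb ω i)) = s :=
        eq_insert_pre ω i s hs2
      have h1 : subwordProd cs ω (pre ω i s) * cs.simple i = w := by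
        rw [← subwordProd_insert, hins]; exact hP
      rw [← h1, mul_assoc, cs.simple_mul_simple_self, mul_one]
    · intro t ht
      obtain ⟨-, hP⟩ := Finset.mem_filter.mp ht
      refine Finset.mem_filter.mpr ⟨Finset.mem_filter.mpr ⟨Finset.mem_univ _, ?_⟩, ?_⟩
      · rw [subwordProd_insert, hP, mul_assoc, cs.simple_mul_simple_self, mul_one]
      · exact Finset.mem_insert_self _ _
    · intro s hs
      exact eq_insert_pre ω i s (Finset.mem_filter.mp hs).2
    · intro t ht
      exact pre_insert_map ω i t
    · intro s hs
      obtain ⟨hs1, hs2⟩ := Finset.mem_filter.mp hs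
      obtain ⟨-, hP⟩ := Finset.mem_filter.mp hs1
      have hins : insert (lastIdx ω i) ((pre ω i s).map (emb ω i)) = s :=
        eq_insert_pre ω i s hs2
      have hsub : subwordProd cs ω (pre ω i s) = w * cs.simple i := by
        have h1 : subwordProd cs ω (pre ω i s) * cs.simple i = w := by
          rw [← subwordProd_insert, hins]; exact hP
        rw [← h1, mul_assoc, cs.simple_mul_simple_self, mul_one]
      conv_lhs => rw [← hins]
      exact term_mem cs act sroot hbar ω i w (pre ω i s) hsub

end StableBasis14
end
end
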